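/- Suppose 1_N ∈ Ker L and the pair ([C̄', (L⊗H)']', I_N ⊗ A) is detectable. Then for every i = 1,...,N, the unobservable subspace of (H,A) intersects the undetectable subspace of (C_i,A) trivially: O_H^u ∩ C_i^u = {0}. -/

import Mathlib

open Matrix Kronecker Polynomial

/-- Block diagonal matrix `C̄ = diag[C_1, …, C_N]`. -/
def Cbar {N n : ℕ} (m : Fin N → ℕ) (C : ∀ i, Matrix (Fin (m i)) (Fin n) ℝ) :
    Matrix ((i : Fin N) × Fin (m i)) (Fin N × Fin n) ℝ :=
  Matrix.of fun p q => if p.1 = q.1 then C p.1 p.2 q.2 else 0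

lemma pow_eq_sum_pow {n : ℕ} (hn : 0 < n) (A : Matrix (Fin n) (Fin n) ℝ) (l : ℕ) :
    ∃ c : ℕ → ℝ, A ^ l = ∑ j ∈ Finset.range n, c j • A ^ j := by
  have hm := A.charpoly_monic
  have hdeg : A.charpoly.natDegree = n := by simp
  set r := (X ^ l : Polynomial ℝ) %ₘ A.charpoly with hr
  have hq1 : A.charpoly ≠ 1 := by
    intro h
    rw [h] at hdeg
    simp at hdeg
    omega
  have hrdeg : r.natDegree < n := by
    rw [← hdeg]
    exact natDegree_modByMonic_lt _ hm hq1
  have key : aeval A r = A ^ l := by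
    have h1 : r = X ^ l - A.charpoly * ((X : Polynomial ℝ) ^ l /ₘ A.charpoly) :=
      modByMonic_eq_sub_mul_div _ _
    rw [h1]
    simp [map_sub, _root_.map_mul, Matrix.aeval_self_charpoly]
  refine ⟨r.coeff, ?_⟩
  rw [← key, aeval_eq_sum_range' hrdeg]

lemma all_pow_mulVec_zero {n p : ℕ} (A : Matrix (Fin n) (Fin n) ℝ)
    (M : Matrix (Fin p) (Fin n) ℝ) (v : Fin n → ℝ)
    (h : ∀ l < n, (M * A ^ l).mulVec v = 0) (l : ℕ) :
    (M * A ^ l).mulVec v = 0 := by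
  rcases Nat.eq_zero_or_pos n with hn | hn
  · subst hn
    funext k
    simp [Matrix.mulVec, dotProduct]
  obtain ⟨c, hc⟩ := pow_eq_sum_pow hn A l
  rw [← Matrix.mulVec_mulVec, hc]
  have hv : (∑ j ∈ Finset.range n, c j • A ^ j).mulVec v
      = ∑ j ∈ Finset.range n, c j • (A ^ j).mulVec v := by
    funext k
    simp only [Matrix.mulVec, dotProduct, Matrix.sum_apply, Finset.sum_apply, Matrix.smul_apply, Pi.smul_apply,
      smul_eq_mul, Finset.sum_mul, Finset.mul_sum, mul_assoc]
    rw [Finset.sum_comm]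
  rw [hv]
  have hms : M *ᵥ (∑ j ∈ Finset.range n, c j • (A ^ j) *ᵥ v)
      = ∑ j ∈ Finset.range n, c j • (M *ᵥ ((A ^ j) *ᵥ v)) := by
    simp only [Matrix.mulVec_sum, Matrix.mulVec_smul]
  rw [hms]
  refine Finset.sum_eq_zero fun j hj => ?_
  rw [Matrix.mulVec_mulVec, h j (Finset.mem_range.mp hj), smul_zero]

lemma sum_mulVec' {ι : Type*} (s : Finset ι) {p q : Type*} [Fintype q] (M : ι → Matrix p q ℝ)
    (x : q → ℝ) : (∑ j ∈ s, M j) *ᵥ x = ∑ j ∈ s, (M j) *ᵥ x := by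
  funext k
  simp only [Matrix.mulVec, dotProduct, Matrix.sum_apply, Finset.sum_apply, Finset.sum_mul]
  rw [Finset.sum_comm]

lemma one_kron_pow {N n : ℕ} (A : Matrix (Fin n) (Fin n) ℝ) (l : ℕ) :
    ((1 : Matrix (Fin N) (Fin N) ℝ) ⊗ₖ A) ^ l
      = (1 : Matrix (Fin N) (Fin N) ℝ) ⊗ₖ (A ^ l) := by
  induction l with
  | zero => simp [Matrix.one_kronecker_one]
  | succ l ih => rw [pow_succ, ih, ← Matrix.mul_kronecker_mul, one_mul, pow_succ]

lemma kron_mulVec {N n p q : ℕ} (P : Matrix (Fin p) (Fin N) ℝ) (B : Matrix (Fin q) (Fin n) ℝ)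
    (e : Fin N → ℝ) (w : Fin n → ℝ) :
    (P ⊗ₖ B) *ᵥ (fun x : Fin N × Fin n => e x.1 * w x.2)
      = fun y : Fin p × Fin q => (P *ᵥ e) y.1 * ((B *ᵥ w) y.2) := by
  funext y
  simp only [Matrix.mulVec, dotProduct, Fintype.sum_prod_type, Matrix.kroneckerMap_apply]
  rw [Finset.sum_mul]
  refine Finset.sum_congr rfl fun j _ => ?_
  rw [Finset.mul_sum]
  exact Finset.sum_congr rfl fun k _ => by ring

lemma Cbar_mulVec {N n : ℕ} (m : Fin N → ℕ) (C : ∀ i, Matrix (Fin (m i)) (Fin n) ℝ)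
    (e : Fin N → ℝ) (w : Fin n → ℝ) :
    (Cbar m C) *ᵥ (fun x : Fin N × Fin n => e x.1 * w x.2)
      = fun p : (i : Fin N) × Fin (m i) => e p.1 * ((C p.1 *ᵥ w) p.2) := by
  funext p
  simp only [Cbar, Matrix.mulVec, dotProduct, Fintype.sum_prod_type, Matrix.of_apply,
    ite_mul, zero_mul]
  rw [Finset.sum_eq_single p.1 (fun b _ hb => by simp [Ne.symm hb])
    (fun h => absurd (Finset.mem_univ _) h)]
  rw [Finset.mul_sum]
  exact Finset.sum_congr rfl fun k _ => by simp only [eq_self_iff_true, if_true]; ring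

lemma aeval_kron_mulVec {N n : ℕ} (A : Matrix (Fin n) (Fin n) ℝ) (q : Polynomial ℝ)
    (e : Fin N → ℝ) (w : Fin n → ℝ) :
    (aeval ((1 : Matrix (Fin N) (Fin N) ℝ) ⊗ₖ A) q)
        *ᵥ (fun x : Fin N × Fin n => e x.1 * w x.2)
      = fun y : Fin N × Fin n => e y.1 * ((aeval A q *ᵥ w) y.2) := by
  have h1 : aeval ((1 : Matrix (Fin N) (Fin N) ℝ) ⊗ₖ A) q
      = ∑ j ∈ Finset.range (q.natDegree + 1),
          q.coeff j • ((1 : Matrix (Fin N) (Fin N) ℝ) ⊗ₖ A) ^ j :=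
    aeval_eq_sum_range _
  have h2 : aeval A q = ∑ j ∈ Finset.range (q.natDegree + 1), q.coeff j • A ^ j :=
    aeval_eq_sum_range _
  rw [h1, h2, sum_mulVec', sum_mulVec']
  have hterm : ∀ j : ℕ, (q.coeff j • ((1 : Matrix (Fin N) (Fin N) ℝ) ⊗ₖ A) ^ j)
      *ᵥ (fun x : Fin N × Fin n => e x.1 * w x.2)
      = fun y : Fin N × Fin n => q.coeff j • (e y.1 * ((A ^ j *ᵥ w) y.2)) := by
    intro j
    rw [Matrix.smul_mulVec, one_kron_pow, kron_mulVec, Matrix.one_mulVec]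
    rfl
  funext y
  simp only [Finset.sum_apply, hterm, Pi.smul_apply, smul_eq_mul,
    Matrix.smul_mulVec]
  rw [Finset.mul_sum]
  exact Finset.sum_congr rfl fun j _ => by ring

/-- Theorem 1(ii): if `1_N ∈ Ker L` and the pair `([C̄', (L⊗H)']', I_N ⊗ A)` is
detectable, then for every `i` the unobservable subspace of `(H,A)` intersects
the undetectable subspace of `(C_i,A)` trivially: `O_Hᵘ ∩ C_iᵘ = {0}`. -/
theorem unobs_inter_undet_trivial_of_detectable {n N mH : ℕ} (hN : 0 < N)
    (A : Matrix (Fin n) (Fin n) ℝ)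
    (m : Fin N → ℕ) (C : ∀ i, Matrix (Fin (m i)) (Fin n) ℝ)
    (H : Matrix (Fin mH) (Fin n) ℝ) (L : Matrix (Fin N) (Fin N) ℝ)
    (aminus aplus : Polynomial ℝ)
    (hmonicm : aminus.Monic) (hmonicp : aplus.Monic)
    (hfact : minpoly ℝ A = aminus * aplus)
    (hminus : ∀ μ ∈ (aminus.map (algebraMap ℝ ℂ)).roots, μ.re < 0)
    (hplus : ∀ μ ∈ (aplus.map (algebraMap ℝ ℂ)).roots, 0 ≤ μ.re)
    (hone : L.mulVec (fun _ => 1) = 0)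
    (hdet : ∀ x : Fin N × Fin n → ℝ,
      (∀ l < n * N,
          (Cbar m C * ((1 : Matrix (Fin N) (Fin N) ℝ) ⊗ₖ A) ^ l).mulVec x = 0 ∧
          ((L ⊗ₖ H) * ((1 : Matrix (Fin N) (Fin N) ℝ) ⊗ₖ A) ^ l).mulVec x = 0) →
      (aeval ((1 : Matrix (Fin N) (Fin N) ℝ) ⊗ₖ A) aplus).mulVec x = 0 →
      x = 0) :
    ∀ (i : Fin N) (v : Fin n → ℝ),
      (∀ l < n, (H * A ^ l).mulVec v = 0) →
      (∀ l < n, (C i * A ^ l).mulVec v = 0) → (aeval A aplus).mulVec v = 0 →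
      v = 0 := by
  intro i v hH hC hplusv
  have hHall := all_pow_mulVec_zero A H v hH
  have hCall := all_pow_mulVec_zero A (C i) v hC
  set e : Fin N → ℝ := fun j => if j = i then 1 else 0 with he
  have hx : (fun p : Fin N × Fin n => e p.1 * v p.2) = 0 := by
    apply hdet
    · intro l _
      constructor
      · rw [← Matrix.mulVec_mulVec, one_kron_pow,
          kron_mulVec (1 : Matrix (Fin N) (Fin N) ℝ) (A ^ l) e v, Matrix.one_mulVec,
          Cbar_mulVec m C e (A ^ l *ᵥ v)]
        funext p
        rcases p with ⟨j, k⟩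
        by_cases hj : j = i
        · subst hj
          have hz := congrFun (hCall l) k
          rw [← Matrix.mulVec_mulVec] at hz
          simp [he, hz]
        · simp [he, hj]
      · rw [← Matrix.mulVec_mulVec, one_kron_pow,
          kron_mulVec (1 : Matrix (Fin N) (Fin N) ℝ) (A ^ l) e v, Matrix.one_mulVec,
          kron_mulVec L H e (A ^ l *ᵥ v)]
        funext y
        have hz := congrFun (hHall l) y.2
        rw [← Matrix.mulVec_mulVec] at hz
        simp [hz]
    · rw [aeval_kron_mulVec A aplus e v, hplusv]
      funext y
      simp
  funext k
  have hk := congrFun hx (i, k)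
  simpa [he] using hk
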